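/- Bound on the Kalman gain: if R > 0 and Q ≥ 0, then |K(Q)| ≤ |Q| |H| |R^{-1}|, where K(Q) = Q H*(H Q H* + R)^{-1}. -/

import Mathlib

open ContinuousLinearMap RealInnerProductSpace

variable {V W : Type*} [NormedAddCommGroup V] [InnerProductSpace ℝ V] [CompleteSpace V]
  [NormedAddCommGroup W] [InnerProductSpace ℝ W] [CompleteSpace W]

/-- The Kalman gain operator `K(Q) = Q H* (H Q H* + R)⁻¹`. -/
noncomputable def kalmanGain (H : V →L[ℝ] W) (R : W →L[ℝ] W) (Q : V →L[ℝ] V) : W →L[ℝ] V :=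
  (Q ∘L ContinuousLinearMap.adjoint H) ∘L
    Ring.inverse (H ∘L Q ∘L ContinuousLinearMap.adjoint H + R)

/-- Coercive operators are units. -/
lemma isUnit_of_coercive (T : W →L[ℝ] W) {α : ℝ} (hα : 0 < α)
    (h : ∀ u : W, α * ‖u‖ ^ 2 ≤ ⟪T u, u⟫) : IsUnit T := by
  refine ContinuousLinearMap.isUnit_of_forall_le_norm_inner_map T (c := ⟨α, hα.le⟩)
    (by exact_mod_cast hα) fun x => ?_
  have h1 : α * ‖x‖ ^ 2 ≤ ⟪T x, x⟫ := h x
  have : (⟪T x, x⟫ : ℝ) ≤ ‖(⟪T x, x⟫ : ℝ)‖ := le_abs_self _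
  calc ‖x‖ ^ 2 * (⟨α, hα.le⟩ : NNReal) = α * ‖x‖ ^ 2 := by
        simp [mul_comm]
    _ ≤ ⟪T x, x⟫ := h1
    _ ≤ ‖(⟪T x, x⟫ : ℝ)‖ := this

/-- Cauchy–Schwarz for a positive operator. -/
lemma isPositive_cauchy_schwarz (T : W →L[ℝ] W) (hT : T.IsPositive) (x y : W) :
    ⟪T x, y⟫ * ⟪T x, y⟫ ≤ ⟪T x, x⟫ * ⟪T y, y⟫ := by
  have hsym : ∀ a b : W, ⟪T a, b⟫ = ⟪T b, a⟫ := fun a b => by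
    have hadj : ContinuousLinearMap.adjoint T = T :=
      ContinuousLinearMap.isSelfAdjoint_iff'.mp (ContinuousLinearMap.isSelfAdjoint_iff_isSymmetric.mpr hT.1)
    conv_lhs => rw [← hadj]
    rw [ContinuousLinearMap.adjoint_inner_left, real_inner_comm]
  have hnn : ∀ a : W, 0 ≤ ⟪T a, a⟫ := fun a => hT.inner_nonneg_left a
  have hq : ∀ t : ℝ, 0 ≤ ⟪T y, y⟫ * (t * t) + (2 * ⟪T x, y⟫) * t + ⟪T x, x⟫ := by
    intro t
    have := hnn (x + t • y)
    have hexp : ⟪T (x + t • y), x + t • y⟫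
        = ⟪T y, y⟫ * (t * t) + (2 * ⟪T x, y⟫) * t + ⟪T x, x⟫ := by
      rw [map_add, map_smul]
      simp only [inner_add_left, inner_add_right, real_inner_smul_left, real_inner_smul_right,
        coe_smul', Pi.smul_apply, smul_eq_mul]
      rw [hsym y x]
      ring
    linarith [hexp ▸ this]
  have hd := discrim_le_zero hq
  rw [discrim] at hd
  nlinarith [hd]

/-- Key estimate: `‖v‖² ≤ ‖R⁻¹‖ ⟪R v, v⟫` for `R` positive invertible. -/
lemma norm_sq_le_inv_norm_mul_inner (R : W →L[ℝ] W) (hR : R.IsPositive) (hu : IsUnit R)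
    (v : W) : ‖v‖ ^ 2 ≤ ‖(Ring.inverse R : W →L[ℝ] W)‖ * ⟪R v, v⟫ := by
  set R' : W →L[ℝ] W := Ring.inverse R with hR'
  have hRR' : ∀ w : W, R (R' w) = w := fun w => by
    have := Ring.mul_inverse_cancel R hu
    calc R (R' w) = (R * R') w := rfl
      _ = w := by rw [this]; rfl
  by_cases hv : v = 0
  · simp [hv]
  · have hv2 : (0:ℝ) < ‖v‖ ^ 2 := by have := norm_pos_iff.mpr hv; positivity
    have hcs := isPositive_cauchy_schwarz R hR (R' v) v
    have h1 : ⟪R (R' v), v⟫ = ‖v‖ ^ 2 := by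
      rw [hRR' v, real_inner_self_eq_norm_sq]
    have h2 : ⟪R (R' v), R' v⟫ = ⟪v, R' v⟫ := by rw [hRR' v]
    rw [h1, h2] at hcs
    have h3 : ⟪v, R' v⟫ ≤ ‖R'‖ * ‖v‖ ^ 2 := by
      calc ⟪v, R' v⟫ ≤ ‖v‖ * ‖R' v‖ := real_inner_le_norm _ _
        _ ≤ ‖v‖ * (‖R'‖ * ‖v‖) := by
            have := R'.le_opNorm v
            have : ‖R' v‖ ≤ ‖R'‖ * ‖v‖ := this
            nlinarith [norm_nonneg v]
        _ = ‖R'‖ * ‖v‖ ^ 2 := by ring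
    have h4 : (0:ℝ) ≤ ⟪R v, v⟫ := hR.inner_nonneg_left v
    nlinarith [hcs, h3, h4, hv2]

/-- Bound on the Kalman gain: if `R > 0` and `Q ≥ 0`, then `|K(Q)| ≤ |Q| |H| |R⁻¹|`. -/
theorem kalmanGain_bound
    (H : V →L[ℝ] W) (R : W →L[ℝ] W) (Q : V →L[ℝ] V)
    (hQ : Q.IsPositive) (hRsym : IsSelfAdjoint R)
    (hRpos : ∃ α : ℝ, 0 < α ∧ ∀ u : W, α * ‖u‖ ^ 2 ≤ ⟪R u, u⟫) :
    ‖kalmanGain H R Q‖ ≤ ‖Q‖ * ‖H‖ * ‖(Ring.inverse R : W →L[ℝ] W)‖ := by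
  obtain ⟨α, hα, hcoer⟩ := hRpos
  set S : W →L[ℝ] W := H ∘L Q ∘L ContinuousLinearMap.adjoint H + R with hSdef
  have hHQH : ∀ u : W, ⟪(H ∘L Q ∘L ContinuousLinearMap.adjoint H) u, u⟫
      = ⟪Q (ContinuousLinearMap.adjoint H u), ContinuousLinearMap.adjoint H u⟫ := by
    intro u
    simp only [ContinuousLinearMap.comp_apply]
    rw [← ContinuousLinearMap.adjoint_inner_right H]
  have hHQHnn : ∀ u : W, 0 ≤ ⟪(H ∘L Q ∘L ContinuousLinearMap.adjoint H) u, u⟫ := fun u => by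
    rw [hHQH u]; exact hQ.inner_nonneg_left _
  have hScoer : ∀ u : W, α * ‖u‖ ^ 2 ≤ ⟪S u, u⟫ := fun u => by
    have : ⟪S u, u⟫ = ⟪(H ∘L Q ∘L ContinuousLinearMap.adjoint H) u, u⟫ + ⟪R u, u⟫ := by
      simp [hSdef, inner_add_left]
    rw [this]
    linarith [hHQHnn u, hcoer u]
  have hSunit : IsUnit S := isUnit_of_coercive S hα hScoer
  have hRunit : IsUnit R := isUnit_of_coercive R hα hcoer
  have hRposOp : R.IsPositive := by
    refine ⟨ContinuousLinearMap.isSelfAdjoint_iff_isSymmetric.mp hRsym, fun u => ?_⟩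
    have := hcoer u
    have h0 : (0:ℝ) ≤ α * ‖u‖ ^ 2 := by positivity
    exact le_trans h0 this
  set R' : W →L[ℝ] W := Ring.inverse R with hR'def
  have hR'nonneg : (0:ℝ) ≤ ‖R'‖ := norm_nonneg _
  -- bound on ‖(Ring.inverse S) u‖
  have hSinv_bound : ∀ u : W, ‖(Ring.inverse S : W →L[ℝ] W) u‖ ≤ ‖R'‖ * ‖u‖ := by
    intro u
    set v : W := (Ring.inverse S : W →L[ℝ] W) u with hv
    have hSv : S v = u := by
      have := Ring.mul_inverse_cancel S hSunit
      calc S v = (S * Ring.inverse S) u := rfl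
        _ = u := by rw [this]; rfl
    by_cases hv0 : v = 0
    · rw [hv0]; simp; positivity
    · have h1 : ‖v‖ ^ 2 ≤ ‖R'‖ * ⟪R v, v⟫ :=
        norm_sq_le_inv_norm_mul_inner R hRposOp hRunit v
      have h2 : ⟪R v, v⟫ ≤ ⟪S v, v⟫ := by
        have : ⟪S v, v⟫ = ⟪(H ∘L Q ∘L ContinuousLinearMap.adjoint H) v, v⟫ + ⟪R v, v⟫ := by
          simp [hSdef, inner_add_left]
        linarith [hHQHnn v, this.ge.trans_eq rfl, this ▸ le_refl (⟪S v, v⟫ : ℝ)]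
      have h3 : ⟪S v, v⟫ = ⟪u, v⟫ := by rw [hSv]
      have h4 : ⟪u, v⟫ ≤ ‖u‖ * ‖v‖ := real_inner_le_norm _ _
      have h5 : ‖v‖ ^ 2 ≤ ‖R'‖ * (‖u‖ * ‖v‖) := by
        calc ‖v‖ ^ 2 ≤ ‖R'‖ * ⟪R v, v⟫ := h1
          _ ≤ ‖R'‖ * ⟪S v, v⟫ := by nlinarith [h2]
          _ = ‖R'‖ * ⟪u, v⟫ := by rw [h3]
          _ ≤ ‖R'‖ * (‖u‖ * ‖v‖) := by nlinarith [h4]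
      have hvpos : (0:ℝ) < ‖v‖ := norm_pos_iff.mpr hv0
      nlinarith [h5, hvpos]
  have hSinv_norm : ‖(Ring.inverse S : W →L[ℝ] W)‖ ≤ ‖R'‖ :=
    ContinuousLinearMap.opNorm_le_bound _ hR'nonneg hSinv_bound
  have hstep : ‖kalmanGain H R Q‖
      ≤ ‖Q ∘L ContinuousLinearMap.adjoint H‖ * ‖(Ring.inverse S : W →L[ℝ] W)‖ := by
    rw [kalmanGain]
    exact ContinuousLinearMap.opNorm_comp_le _ _
  have hQH : ‖Q ∘L ContinuousLinearMap.adjoint H‖ ≤ ‖Q‖ * ‖H‖ := by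
    calc ‖Q ∘L ContinuousLinearMap.adjoint H‖ ≤ ‖Q‖ * ‖ContinuousLinearMap.adjoint H‖ :=
          ContinuousLinearMap.opNorm_comp_le _ _
      _ = ‖Q‖ * ‖H‖ := by
          congr 1
          exact LinearIsometryEquiv.norm_map (ContinuousLinearMap.adjoint) H
  calc ‖kalmanGain H R Q‖
      ≤ ‖Q ∘L ContinuousLinearMap.adjoint H‖ * ‖(Ring.inverse S : W →L[ℝ] W)‖ := hstep
    _ ≤ (‖Q‖ * ‖H‖) * ‖R'‖ := by
        apply mul_le_mul hQH hSinv_norm (norm_nonneg _)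
        positivity
    _ = ‖Q‖ * ‖H‖ * ‖(Ring.inverse R : W →L[ℝ] W)‖ := by rw [hR'def]
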